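/- There exist absolute constants c > 0, ε₀ ∈ (0,1), and n₀ ∈ ℕ such that for every n ≥ n₀ and every ε ∈ (0, ε₀], the product distribution P over {0,1}^n with mean vector (1/2 + ε/√n, ..., 1/2 + ε/√n) satisfies ‖P − U‖₁ ≥ c·ε, where U is the uniform distribution over {0,1}^n. -/

import Mathlib

/-- The product distribution over `{0,1}^n` with mean vector `p`. -/
noncomputable def prodDist {n : ℕ} (p : Fin n → ℝ) : (Fin n → Bool) → ℝ :=
  fun x => ∏ i, if x i then p i else 1 - p i

/-- The L1 distance between two distributions on a finite set. -/
noncomputable def l1Dist {α : Type*} [Fintype α] (P Q : α → ℝ) : ℝ :=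
  ∑ x, |P x - Q x|

def wt {n : ℕ} (x : Fin n → Bool) : ℕ := (Finset.univ.filter fun i => x i = true).card

lemma card_wt (n k : ℕ) :
    (Finset.univ.filter fun x : Fin n → Bool => wt x = k).card = n.choose k := by
  have h : ((Finset.univ : Finset (Fin n)).powersetCard k).card = n.choose k := by
    rw [Finset.card_powersetCard, Finset.card_univ, Fintype.card_fin]
  rw [← h]
  apply Finset.card_bij (fun x _ => Finset.univ.filter fun i => x i = true)
  · intro x hx
    simp only [Finset.mem_filter, Finset.mem_univ, true_and] at hx
    rw [Finset.mem_powersetCard]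
    exact ⟨Finset.filter_subset _ _ |>.trans (Finset.subset_univ _), hx⟩
  · intro x hx y hy hxy
    funext i
    have := Finset.ext_iff.mp hxy i
    simp only [Finset.mem_filter, Finset.mem_univ, true_and] at this
    by_cases h1 : x i <;> by_cases h2 : y i <;> simp_all
  · intro s hs
    rw [Finset.mem_powersetCard] at hs
    refine ⟨fun i => decide (i ∈ s), ?_, ?_⟩
    · simp only [Finset.mem_filter, Finset.mem_univ, true_and, wt]
      rw [← hs.2]
      congr 1
      exact Finset.mem_filter.mpr ⟨Finset.mem_univ _, by simp only [wt]; congr 1; ext i; simp⟩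
    · ext i; simp

lemma prod_const_wt {n : ℕ} (a b : ℝ) (x : Fin n → Bool) :
    (∏ i, if x i then a else b) = a ^ wt x * b ^ (n - wt x) := by
  rw [Finset.prod_ite, Finset.prod_const, Finset.prod_const]
  congr 1
  rw [Finset.filter_not, Finset.card_sdiff_of_subset (Finset.filter_subset _ _), Finset.card_univ,
    Fintype.card_fin]
  rfl

lemma choose_ratio (n m k : ℕ) (hk : k ≤ n) (hm1 : 1 ≤ m) :
    ∀ d : ℕ, m + d ≤ k →
      (n.choose m : ℝ) * (((n:ℝ) - k + 1) / k) ^ d ≤ n.choose (m + d) := by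
  intro d
  induction d with
  | zero => intro _; simp
  | succ d ih =>
    intro hd
    have hk1 : 1 ≤ k := by omega
    have hkpos : (0:ℝ) < k := by exact_mod_cast hk1
    have hrnum : (0:ℝ) ≤ (n:ℝ) - k + 1 := by
      have : (k:ℝ) ≤ n := by exact_mod_cast hk
      linarith
    have hr0 : (0:ℝ) ≤ ((n:ℝ) - k + 1) / k := by positivity
    set j := m + d with hj
    have hjk : j + 1 ≤ k := by omega
    have hstep : (n.choose j : ℝ) * (((n:ℝ) - j) / (j + 1)) = n.choose (j+1) := by
      have h := Nat.choose_succ_right_eq n j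
      have hjn : j ≤ n := by omega
      have : ((n.choose (j+1) : ℝ)) * (j+1) = (n.choose j : ℝ) * ((n:ℝ) - j) := by
        have := congrArg (Nat.cast : ℕ → ℝ) h
        push_cast at this
        rw [Nat.cast_sub hjn] at this
        linarith [this]
      field_simp
      linarith [this]
    have hrle : ((n:ℝ) - k + 1) / k ≤ ((n:ℝ) - j) / (j + 1) := by
      have h1 : (0:ℝ) < (j:ℝ) + 1 := by positivity
      have h2 : ((j:ℝ) + 1) ≤ k := by exact_mod_cast hjk
      have h3 : ((n:ℝ) - k + 1) ≤ (n:ℝ) - j := by linarith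
      exact div_le_div₀ (by linarith) h3 h1 h2
    calc (n.choose m : ℝ) * (((n:ℝ) - k + 1) / k) ^ (d+1)
        = ((n.choose m : ℝ) * (((n:ℝ) - k + 1) / k) ^ d) * (((n:ℝ) - k + 1) / k) := by ring
      _ ≤ (n.choose j : ℝ) * (((n:ℝ) - k + 1) / k) := by
          apply mul_le_mul_of_nonneg_right (ih (by omega)) hr0
      _ ≤ (n.choose j : ℝ) * (((n:ℝ) - j) / (j + 1)) := by
          apply mul_le_mul_of_nonneg_left hrle (by positivity)
      _ = n.choose (j+1) := hstep

lemma cheb (n : ℕ) : ∑ k ∈ Finset.range (n+1), (n.choose k : ℤ) * (2*(k:ℤ) - (n:ℤ))^2 = (n:ℤ) * 2^n := by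
  induction n with
  | zero => simp
  | succ n ih =>
    have hsum : (∑ k ∈ Finset.range (n+1), (n.choose k : ℤ)) = 2^n := by
      exact_mod_cast congrArg (Nat.cast : ℕ → ℤ) (Nat.sum_range_choose n)
    have h3 : ∑ i ∈ Finset.range (n+1), (n.choose (i+1) : ℤ) * (2*((i:ℤ)+1) - ((n:ℤ)+1))^2
        = (∑ i ∈ Finset.range (n+1), (n.choose i : ℤ) * (2*(i:ℤ) - ((n:ℤ)+1))^2) - ((n:ℤ)+1)^2 := by
      have h1 := Finset.sum_range_succ' (fun i => (n.choose i : ℤ) * (2*(i:ℤ) - ((n:ℤ)+1))^2) (n+1)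
      have h2 : ∑ i ∈ Finset.range (n+1+1), (n.choose i : ℤ) * (2*(i:ℤ) - ((n:ℤ)+1))^2
          = ∑ i ∈ Finset.range (n+1), (n.choose i : ℤ) * (2*(i:ℤ) - ((n:ℤ)+1))^2 := by
        rw [Finset.sum_range_succ, Nat.choose_succ_self]; simp
      rw [h2] at h1
      have g0 : (n.choose 0 : ℤ) * (2*((0:ℕ):ℤ) - ((n:ℤ)+1))^2 = ((n:ℤ)+1)^2 := by
        simp; ring
      rw [g0] at h1
      push_cast at h1 ⊢
      linarith [h1]
    have h0 := Finset.sum_range_succ' (fun k => (((n+1).choose k : ℤ)) * (2*(k:ℤ) - ((n:ℤ)+1))^2) (n+1)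
    have hcc : ∀ i : ℕ, (((n+1).choose (i+1) : ℤ)) = (n.choose i : ℤ) + (n.choose (i+1) : ℤ) := by
      intro i; exact_mod_cast congrArg (Nat.cast : ℕ → ℤ) (Nat.choose_succ_succ n i)
    have expand : ∑ i ∈ Finset.range (n+1), (((n+1).choose (i+1) : ℤ)) * (2*((i:ℤ)+1) - ((n:ℤ)+1))^2
        = (∑ i ∈ Finset.range (n+1), (n.choose i : ℤ) * (2*((i:ℤ)+1) - ((n:ℤ)+1))^2)
          + ∑ i ∈ Finset.range (n+1), (n.choose (i+1) : ℤ) * (2*((i:ℤ)+1) - ((n:ℤ)+1))^2 := by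
      rw [← Finset.sum_add_distrib]
      apply Finset.sum_congr rfl; intro i _; rw [hcc i]; ring
    have comb : (∑ i ∈ Finset.range (n+1), (n.choose i : ℤ) * (2*((i:ℤ)+1) - ((n:ℤ)+1))^2)
        + (∑ i ∈ Finset.range (n+1), (n.choose i : ℤ) * (2*(i:ℤ) - ((n:ℤ)+1))^2)
        = 2 * (∑ k ∈ Finset.range (n+1), (n.choose k : ℤ) * (2*(k:ℤ) - (n:ℤ))^2)
          + 2 * (∑ k ∈ Finset.range (n+1), (n.choose k : ℤ)) := by
      rw [Finset.mul_sum, Finset.mul_sum, ← Finset.sum_add_distrib, ← Finset.sum_add_distrib]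
      apply Finset.sum_congr rfl; intros; ring
    have g0' : (((n+1).choose 0 : ℤ)) * (2*((0:ℕ):ℤ) - ((n:ℤ)+1))^2 = ((n:ℤ)+1)^2 := by
      simp; ring
    rw [g0'] at h0
    push_cast at h0 expand h3 comb ⊢
    rw [ih, hsum] at comb
    have hp : ((n:ℤ)+1) * 2^(n+1) = 2 * ((n:ℤ) * 2^n) + 2 * 2^n := by ring
    push_cast at comb hp
    rw [h0, expand, h3, hp]
    linarith [comb]

lemma middle_lb (n : ℕ) (hn : 9 ≤ n) :
    (3/4:ℝ) * 2^n / (2 * Nat.sqrt n + 2) ≤ n.choose (n/2) := by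
  set s := Nat.sqrt n with hs
  have hs1 : s ^ 2 ≤ n := Nat.sqrt_le' n
  have hs2 : n < (s+1) ^ 2 := Nat.lt_succ_sqrt' n
  have hs3 : 3 ≤ s := by
    rw [hs, Nat.le_sqrt']; omega
  set T := Finset.range (n+1) with hT
  set mid := T.filter (fun k : ℕ => ((2*(k:ℤ) - n)^2 ≤ 4*(n:ℤ))) with hmid
  set tail := T.filter (fun k : ℕ => ¬ ((2*(k:ℤ) - n)^2 ≤ 4*(n:ℤ))) with htail
  have hsplit : ∑ k ∈ mid, (n.choose k : ℝ) + ∑ k ∈ tail, (n.choose k : ℝ) = ∑ k ∈ T, (n.choose k : ℝ) :=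
    Finset.sum_filter_add_sum_filter_not T _ _
  have htot : ∑ k ∈ T, (n.choose k : ℝ) = 2^n := by
    exact_mod_cast congrArg (Nat.cast : ℕ → ℝ) (Nat.sum_range_choose n)
  have hchebR : ∑ k ∈ T, (n.choose k : ℝ) * (2*(k:ℝ) - (n:ℝ))^2 = (n:ℝ) * 2^n := by
    exact_mod_cast congrArg (Int.cast : ℤ → ℝ) (cheb n)
  have hnpos : (0:ℝ) < n := by positivity
  have htail_le : ∑ k ∈ tail, (n.choose k : ℝ) ≤ 2^n / 4 := by
    have h1 : ∀ k ∈ tail, (n.choose k : ℝ) ≤ (n.choose k : ℝ) * (2*(k:ℝ) - (n:ℝ))^2 / (4*n) := by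
      intro k hk
      rw [htail, Finset.mem_filter] at hk
      have h4 : (4:ℤ)*(n:ℤ) < (2*(k:ℤ) - n)^2 := by omega
      have h4R : (4:ℝ)*(n:ℝ) ≤ (2*(k:ℝ) - (n:ℝ))^2 := by exact_mod_cast h4.le
      have hcpos : (0:ℝ) ≤ (n.choose k : ℝ) := by positivity
      rw [le_div_iff₀ (by positivity)]
      nlinarith [hcpos, h4R]
    calc ∑ k ∈ tail, (n.choose k : ℝ)
        ≤ ∑ k ∈ tail, (n.choose k : ℝ) * (2*(k:ℝ) - (n:ℝ))^2 / (4*n) := Finset.sum_le_sum h1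
      _ ≤ ∑ k ∈ T, (n.choose k : ℝ) * (2*(k:ℝ) - (n:ℝ))^2 / (4*n) := by
          apply Finset.sum_le_sum_of_subset_of_nonneg (Finset.filter_subset _ _)
          intro k _ _; positivity
      _ = ((n:ℝ) * 2^n) / (4*n) := by
          rw [← Finset.sum_div, hchebR]
      _ = 2^n / 4 := by field_simp
  have hmid_card : mid.card ≤ 2*s + 2 := by
    have hsub : mid ⊆ Finset.Icc ((n - 2*s - 1)/2) ((n + 2*s + 1)/2) := by
      intro k hk
      rw [hmid, Finset.mem_filter] at hk
      obtain ⟨hkT, hk2⟩ := hk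
      have hb : 4 * (n:ℤ) < (2*(s:ℤ)+2)^2 := by
        have : (n:ℤ) < ((s:ℤ)+1)^2 := by exact_mod_cast hs2
        nlinarith
      have habs1 : 2*(k:ℤ) - n ≤ 2*s + 1 := by nlinarith
      have habs2 : -(2*(s:ℤ) + 1) ≤ 2*(k:ℤ) - n := by nlinarith
      rw [Finset.mem_Icc]
      constructor
      · have : (n:ℤ) - 2*s - 1 ≤ 2*k := by linarith
        have hz : n - 2*s - 1 ≤ 2*k := by omega
        omega
      · have : 2*(k:ℤ) ≤ n + 2*s + 1 := by linarith
        have hz : 2*k ≤ n + 2*s + 1 := by exact_mod_cast this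
        omega
    calc mid.card ≤ _ := Finset.card_le_card hsub
      _ ≤ 2*s+2 := by
          rw [Nat.card_Icc]
          omega
  have hmid_le : ∑ k ∈ mid, (n.choose k : ℝ) ≤ (2*(s:ℝ)+2) * n.choose (n/2) := by
    calc ∑ k ∈ mid, (n.choose k : ℝ) ≤ ∑ _k ∈ mid, (n.choose (n/2) : ℝ) := by
          apply Finset.sum_le_sum
          intro k _
          exact_mod_cast Nat.choose_le_middle k n
      _ = (mid.card : ℝ) * n.choose (n/2) := by rw [Finset.sum_const]; push_cast; ring
      _ ≤ (2*(s:ℝ)+2) * n.choose (n/2) := by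
          apply mul_le_mul_of_nonneg_right _ (by positivity)
          exact_mod_cast hmid_card
  have h2n : (2:ℝ)^n - 2^n/4 ≤ (2*(s:ℝ)+2) * n.choose (n/2) := by
    linarith [hsplit, htot, htail_le, hmid_le]
  rw [div_le_iff₀ (by positivity)]
  linarith [h2n]

lemma exp_le_one_sub (x : ℝ) (h0 : 0 ≤ x) (h2 : x ≤ 1/2) : Real.exp (-(2*x)) ≤ 1 - x := by
  have h1 : 2*x + 1 ≤ Real.exp (2*x) := Real.add_one_le_exp (2*x)
  have hpos : (0:ℝ) < 1 + 2*x := by linarith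
  have h2' : Real.exp (-(2*x)) = (Real.exp (2*x))⁻¹ := by
    rw [Real.exp_neg]
  rw [h2']
  have h3 : (Real.exp (2*x))⁻¹ ≤ (1 + 2*x)⁻¹ := by
    apply inv_anti₀ hpos
    linarith
  have h4 : (1 + 2*x)⁻¹ ≤ 1 - x := by
    rw [inv_le_iff_one_le_mul₀ hpos]
    nlinarith
  linarith


set_option maxHeartbeats 1000000 in
theorem stmt6 : ∃ c : ℝ, 0 < c ∧ ∃ ε₀ ∈ Set.Ioo (0:ℝ) 1, ∃ n₀ : ℕ,
    ∀ n : ℕ, n₀ ≤ n → ∀ ε : ℝ, ε ∈ Set.Ioc (0:ℝ) ε₀ →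
      c * ε ≤ l1Dist (prodDist (fun _ : Fin n => 1/2 + ε / Real.sqrt n))
                (fun _ : Fin n → Bool => (2:ℝ)⁻¹ ^ n) := by
  refine ⟨Real.exp (-64) / 4, by positivity, 1/20, ⟨by norm_num, by norm_num⟩, 10000, ?_⟩
  intro n hn ε hε
  obtain ⟨hε0, hε1⟩ := hε
  set s := Nat.sqrt n with hsdef
  set m := n / 2 with hmdef
  have hs1 : s ^ 2 ≤ n := Nat.sqrt_le' n
  have hs2 : n < (s+1) ^ 2 := Nat.lt_succ_sqrt' n
  have hs100 : 100 ≤ s := by rw [hsdef, Nat.le_sqrt']; omega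
  have h4s : 4 * s ≤ n := by nlinarith
  have hksn : m + 2*s ≤ n := by omega
  have hm1 : 1 ≤ m := by omega
  -- real facts
  have hnposR : (0:ℝ) < n := by positivity
  have hrnpos : (0:ℝ) < Real.sqrt n := Real.sqrt_pos.mpr hnposR
  have hrn1 : (s:ℝ) ≤ Real.sqrt n := by
    have h : ((s:ℝ))^2 ≤ (n:ℝ) := by exact_mod_cast hs1
    have := Real.sqrt_le_sqrt h
    rwa [Real.sqrt_sq (by positivity)] at this
  have hrn2 : Real.sqrt n ≤ (s:ℝ) + 1 := by
    have h : (n:ℝ) ≤ ((s:ℝ)+1)^2 := by exact_mod_cast hs2.le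
    have := Real.sqrt_le_sqrt h
    rwa [Real.sqrt_sq (by positivity)] at this
  have hs100R : (100:ℝ) ≤ s := by exact_mod_cast hs100
  set δ := ε / Real.sqrt n with hδdef
  have hδpos : 0 < δ := by positivity
  have hδ1 : δ ≤ 1/2000 := by
    rw [hδdef, div_le_iff₀ hrnpos]
    have : (100:ℝ) ≤ Real.sqrt n := le_trans hs100R hrn1
    nlinarith
  have hδsq : δ^2 * n = ε^2 := by
    rw [hδdef, div_pow, Real.sq_sqrt hnposR.le]
    field_simp
  set u : ℝ := (2:ℝ)⁻¹ ^ n with hudef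
  have hupos : 0 < u := by positivity
  have hu2n : u * 2^n = 1 := by
    rw [hudef, ← mul_pow]; norm_num
  set P := prodDist (fun _ : Fin n => 1/2 + δ) with hPdef
  set W := Finset.Ioc (m + s) (m + 2*s) with hWdef
  set S := Finset.univ.filter (fun x : Fin n → Bool => wt x ∈ W) with hSdef
  -- Step 1
  have hstep1 : ∑ x ∈ S, (P x - u) ≤ l1Dist P (fun _ : Fin n → Bool => u) := by
    unfold l1Dist
    calc ∑ x ∈ S, (P x - u) ≤ ∑ x ∈ S, |P x - u| :=
          Finset.sum_le_sum (fun x _ => le_abs_self _)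
      _ ≤ ∑ x, |P x - u| := by
          apply Finset.sum_le_sum_of_subset_of_nonneg (Finset.subset_univ S)
          intro x _ _; exact abs_nonneg _
  -- Step 2: fiberwise
  have hfib : ∑ x ∈ S, (P x - u)
      = ∑ k ∈ W, (n.choose k : ℝ) * ((1/2 + δ)^k * (1/2 - δ)^(n-k) - u) := by
    rw [← Finset.sum_fiberwise_of_maps_to (g := wt)
      (fun x hx => (Finset.mem_filter.mp hx).2) (f := fun x => P x - u)]
    apply Finset.sum_congr rfl
    intro k hk
    have hfil : S.filter (fun x => wt x = k)
        = Finset.univ.filter (fun x : Fin n → Bool => wt x = k) := by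
      ext x
      simp only [hSdef, Finset.mem_filter, Finset.mem_univ, true_and, and_iff_right_iff_imp]
      intro hwx; rw [hwx]; exact hk
    rw [hfil]
    have hconst : ∀ x ∈ Finset.univ.filter (fun x : Fin n → Bool => wt x = k),
        P x - u = (1/2 + δ)^k * (1/2 - δ)^(n-k) - u := by
      intro x hx
      rw [Finset.mem_filter] at hx
      have hP : P x = (1/2 + δ)^(wt x) * (1 - (1/2 + δ))^(n - wt x) := by
        rw [hPdef]; exact prod_const_wt _ _ x
      rw [hP, hx.2]
      ring_nf
    rw [Finset.sum_congr rfl hconst, Finset.sum_const, card_wt, nsmul_eq_mul]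
  -- Step 3 per-term bounds
  have hWk : ∀ k ∈ W, m + s + 1 ≤ k ∧ k ≤ m + 2*s := by
    intro k hk; rw [hWdef, Finset.mem_Ioc] at hk; omega
  have hCk : ∀ k ∈ W, Real.exp (-64) * ((3/4) * 2^n / (2*(s:ℝ)+2)) ≤ (n.choose k : ℝ) := by
    intro k hk
    obtain ⟨hk1, hk2⟩ := hWk k hk
    have hkn : k ≤ n := by omega
    have hkposR : (0:ℝ) < k := by
      have : 1 ≤ k := by omega
      exact_mod_cast this
    set r : ℝ := ((n:ℝ) - k + 1) / k with hrdef
    have hkubR : (k:ℝ) ≤ m + 2*s := by exact_mod_cast hk2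
    have hklbR : (m:ℝ) + s + 1 ≤ k := by exact_mod_cast hk1
    have hmubR : 2*(m:ℝ) ≤ n := by
      have : 2*m ≤ n := by omega
      exact_mod_cast this
    have hmlbR : (n:ℝ) - 1 ≤ 2*m := by
      have : n ≤ 2*m + 1 := by omega
      have h := (Nat.cast_le (α := ℝ)).mpr this
      push_cast at h; linarith
    have hsnR : (s:ℝ)^2 ≤ n := by exact_mod_cast hs1
    have hspos : (0:ℝ) < s := by linarith
    have hint1 : (k:ℝ)*s ≤ ((m:ℝ) + 2*s)*s := by
      apply mul_le_mul_of_nonneg_right hkubR hspos.le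
    have hint2 : ((m:ℝ) + s + 1)*16 ≤ 16*k := by
      nlinarith [hklbR]
    have hintA : (2*(m:ℝ))*(s:ℝ) ≤ (n:ℝ)*(s:ℝ) := mul_le_mul_of_nonneg_right hmubR hspos.le
    have hr_lb : 1 - 16/(s:ℝ) ≤ r := by
      rw [hrdef, le_div_iff₀ hkposR]
      have h : (1 - 16/(s:ℝ)) * k = ((s:ℝ)*k - 16*k)/s := by field_simp
      rw [h, div_le_iff₀ hspos]
      linarith [hint1, hint2, hintA, hmlbR, hsnR, hs100R]
    have h16 : 16/(s:ℝ) ≤ 1/2 := by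
      rw [div_le_iff₀ hspos]; linarith
    have hexp_r : Real.exp (-(2*(16/(s:ℝ)))) ≤ r :=
      le_trans (exp_le_one_sub (16/(s:ℝ)) (by positivity) h16) hr_lb
    have hrpos0 : (0:ℝ) ≤ Real.exp (-(2*(16/(s:ℝ)))) := (Real.exp_pos _).le
    have hdm : k - m ≤ 2*s := by omega
    have hpow1 : Real.exp (-(2*(16/(s:ℝ))))^(k-m) ≤ r^(k-m) :=
      pow_le_pow_left₀ hrpos0 hexp_r _
    have hexple1 : Real.exp (-(2*(16/(s:ℝ)))) ≤ 1 := by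
      rw [Real.exp_le_one_iff]
      have : (0:ℝ) ≤ 2*(16/(s:ℝ)) := by positivity
      linarith
    have hpow2 : Real.exp (-(2*(16/(s:ℝ))))^(2*s) ≤ Real.exp (-(2*(16/(s:ℝ))))^(k-m) :=
      pow_le_pow_of_le_one hrpos0 hexple1 hdm
    have hpow3 : Real.exp (-64) ≤ Real.exp (-(2*(16/(s:ℝ))))^(2*s) := by
      rw [← Real.exp_nat_mul]
      apply Real.exp_le_exp.mpr
      have heq : ((2*s:ℕ):ℝ) * (-(2*(16/(s:ℝ)))) = -64 := by
        push_cast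
        field_simp; ring
      rw [heq]
    have hratio := choose_ratio n m k hkn hm1 (k - m) (by omega)
    rw [show m + (k - m) = k by omega] at hratio
    have hmid := middle_lb n (by omega)
    have hrnonneg : (0:ℝ) ≤ r := le_trans hrpos0 hexp_r
    calc Real.exp (-64) * ((3/4) * 2^n / (2*(s:ℝ)+2))
        ≤ r^(k-m) * ((3/4) * 2^n / (2*(s:ℝ)+2)) := by
          apply mul_le_mul_of_nonneg_right (le_trans hpow3 (le_trans hpow2 hpow1)) (by positivity)
      _ ≤ r^(k-m) * (n.choose m : ℝ) := by
          apply mul_le_mul_of_nonneg_left _ (pow_nonneg hrnonneg _)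
          exact_mod_cast hmid
      _ = (n.choose m : ℝ) * r^(k-m) := by ring
      _ ≤ (n.choose k : ℝ) := hratio
  -- per-term distribution bound
  have hterm : ∀ k ∈ W, 3*ε*u ≤ (1/2 + δ)^k * (1/2 - δ)^(n-k) - u := by
    intro k hk
    obtain ⟨hk1, hk2⟩ := hWk k hk
    set e := k - (n - k) with hedef
    have hkn : k ≤ n := by omega
    have hu' : (2:ℝ)⁻¹^k * (2:ℝ)⁻¹^(n-k) = u := by
      rw [← pow_add, hudef]; congr 1; omega
    have hsplit2 : ((1:ℝ)+2*δ)^e * (1+2*δ)^(n-k) = (1+2*δ)^k := by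
      rw [← pow_add]; congr 1; omega
    have hiden : (1/2 + δ)^k * (1/2 - δ)^(n-k) = (1+2*δ)^e * (1-4*δ^2)^(n-k) * u := by
      calc (1/2 + δ)^k * (1/2 - δ)^(n-k)
          = ((1+2*δ)*2⁻¹)^k * ((1-2*δ)*2⁻¹)^(n-k) := by
            rw [show (1/2 + δ : ℝ) = (1+2*δ)*2⁻¹ by ring,
               show (1/2 - δ : ℝ) = (1-2*δ)*2⁻¹ by ring]
        _ = ((1+2*δ)^k * (1-2*δ)^(n-k)) * ((2:ℝ)⁻¹^k * (2:ℝ)⁻¹^(n-k)) := by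
            rw [mul_pow, mul_pow]; ring
        _ = ((1+2*δ)^e * ((1+2*δ)^(n-k) * (1-2*δ)^(n-k))) * u := by
            rw [hu', ← mul_assoc, hsplit2]
        _ = ((1+2*δ)^e * ((1+2*δ)*(1-2*δ))^(n-k)) * u := by rw [mul_pow]
        _ = (1+2*δ)^e * (1-4*δ^2)^(n-k) * u := by
            rw [show ((1:ℝ)+2*δ)*(1-2*δ) = 1-4*δ^2 by ring]
    have he_lb : 2*s + 1 ≤ e := by omega
    have he_lbR : 2*(s:ℝ) + 1 ≤ (e:ℝ) := by exact_mod_cast he_lb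
    have hb1 : 1 + (e:ℝ)*(2*δ) ≤ (1+2*δ)^e := by
      have := one_add_mul_le_pow (a := 2*δ) (by linarith) e
      linarith [this]
    have hδlb : ε/((s:ℝ)+1) ≤ δ := by
      rw [hδdef]
      apply div_le_div_of_nonneg_left hε0.le hrnpos hrn2
    have hb1' : 1 + (19/5)*ε ≤ (1+2*δ)^e := by
      have h1 : (19/5)*ε ≤ (2*(s:ℝ)+1)*(2*(ε/((s:ℝ)+1))) := by
        rw [div_le_iff₀ (by positivity), mul_comm] at *
        have hsp1 : (0:ℝ) < (s:ℝ)+1 := by linarith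
        rw [show (2*(s:ℝ)+1)*(2*(ε/((s:ℝ)+1))) = (2*(2*(s:ℝ)+1)*ε)/((s:ℝ)+1) by ring]
        rw [le_div_iff₀ hsp1]
        nlinarith [hs100R, hε0]
      have h2 : (2*(s:ℝ)+1)*(2*(ε/((s:ℝ)+1))) ≤ (e:ℝ)*(2*δ) := by
        apply mul_le_mul he_lbR (by linarith [hδlb]) (by positivity) (by positivity)
      linarith [hb1]
    have hb2 : 1 - 4*ε^2 ≤ (1-4*δ^2)^(n-k) := by
      have hber := one_add_mul_le_pow (a := -(4*δ^2)) (by nlinarith [hδ1, hδpos]) (n-k)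
      have hnk : ((n-k:ℕ):ℝ) ≤ n := by exact_mod_cast Nat.sub_le n k
      have h3 : 1 - ((n-k:ℕ):ℝ)*(4*δ^2) ≥ 1 - (n:ℝ)*(4*δ^2) := by
        have hd2 : (0:ℝ) ≤ 4*δ^2 := by positivity
        nlinarith [hnk, hd2]
      have h4 : (n:ℝ)*(4*δ^2) = 4*ε^2 := by
        have := hδsq
        nlinarith [this]
      calc 1 - 4*ε^2 = 1 - (n:ℝ)*(4*δ^2) := by rw [h4]
        _ ≤ 1 + ((n-k:ℕ):ℝ)*(-(4*δ^2)) := by push_cast; linarith [h3]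
        _ ≤ (1-4*δ^2)^(n-k) := by
            have : ((1:ℝ) + -(4*δ^2)) = 1 - 4*δ^2 := by ring
            rw [← this]; exact hber
    have hprod : 1 + 3*ε ≤ (1+2*δ)^e * (1-4*δ^2)^(n-k) := by
      have hA : (0:ℝ) ≤ 1 + (19/5)*ε := by positivity
      have hB : (0:ℝ) ≤ 1 - 4*ε^2 := by nlinarith [hε1, hε0]
      have hC : (1 + (19/5)*ε) * (1 - 4*ε^2) ≤ (1+2*δ)^e * (1-4*δ^2)^(n-k) :=
        mul_le_mul hb1' hb2 hB (by positivity)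
      have hD : 1 + 3*ε ≤ (1 + (19/5)*ε) * (1 - 4*ε^2) := by nlinarith [hε0, hε1, sq_nonneg ε]
      linarith
    rw [hiden]
    have : (1 + 3*ε) * u ≤ ((1+2*δ)^e * (1-4*δ^2)^(n-k)) * u :=
      mul_le_mul_of_nonneg_right hprod hupos.le
    linarith [this]
  -- final assembly
  have hWcard : W.card = s := by rw [hWdef, Nat.card_Ioc]; omega
  set B : ℝ := (Real.exp (-64) * ((3/4) * 2^n / (2*(s:ℝ)+2))) * (3*ε*u) with hBdef
  have hlow : ∀ k ∈ W, B ≤ (n.choose k : ℝ) * ((1/2 + δ)^k * (1/2 - δ)^(n-k) - u) := by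
    intro k hk
    apply mul_le_mul (hCk k hk) (hterm k hk) (by positivity) (by positivity)
  have hsum : (W.card : ℝ) * B ≤ ∑ k ∈ W, (n.choose k : ℝ) * ((1/2 + δ)^k * (1/2 - δ)^(n-k) - u) := by
    have := Finset.card_nsmul_le_sum W _ B hlow
    rwa [nsmul_eq_mul] at this
  rw [hWcard] at hsum
  have hueq : u = ((2:ℝ)^n)⁻¹ := by rw [hudef, inv_pow]
  clear_value B u δ S P W s m
  have hfinal : Real.exp (-64) / 4 * ε ≤ (s:ℝ) * B := by
    have h2npos : (0:ℝ) < 2^n := by positivity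
    have h2n1 : (2:ℝ)^n * ((2:ℝ)^n)⁻¹ = 1 := mul_inv_cancel₀ (ne_of_gt h2npos)
    have hkey : (s:ℝ) * B = (Real.exp (-64) * ε * (9/4) * ((s:ℝ)/(2*(s:ℝ)+2))) * ((2:ℝ)^n * ((2:ℝ)^n)⁻¹) := by
      rw [hBdef, hueq]; ring
    rw [hkey, h2n1, mul_one]
    have hfrac : (1:ℝ)/4 ≤ (s:ℝ)/(2*(s:ℝ)+2) := by
      rw [div_le_div_iff₀ (by norm_num) (by positivity)]
      linarith
    have hmul := mul_le_mul_of_nonneg_left hfrac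
      (by positivity : (0:ℝ) ≤ Real.exp (-64) * ε * (9/4))
    have hEε : (0:ℝ) ≤ Real.exp (-64) * ε := by positivity
    calc Real.exp (-64)/4*ε = (Real.exp (-64)*ε)*(1/4) := by ring
      _ ≤ (Real.exp (-64)*ε)*(9/16) := by
          apply mul_le_mul_of_nonneg_left (by norm_num) hEε
      _ = Real.exp (-64)*ε*(9/4)*(1/4) := by ring
      _ ≤ Real.exp (-64)*ε*(9/4)*((s:ℝ)/(2*(s:ℝ)+2)) := hmul
  calc Real.exp (-64) / 4 * ε ≤ (s:ℝ) * B := hfinal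
    _ ≤ ∑ k ∈ W, (n.choose k : ℝ) * ((1/2 + δ)^k * (1/2 - δ)^(n-k) - u) := hsum
    _ = ∑ x ∈ S, (P x - u) := hfib.symm
    _ ≤ l1Dist P (fun _ : Fin n → Bool => u) := hstep1
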